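/- Let R be a Noetherian local ring. Assume (PS): for all nonzero finitely generated R-modules M and N with pd_R N < ∞ and M ⊗_R N of finite length, one has dim M ≤ grade N. Then (DI) holds: for all nonzero finitely generated R-modules M and N with pd_R N < ∞ and M ⊗_R N of finite length, one has dim M + dim N ≤ dim R. -/

import Mathlib

/-!
STATEMENT 9: For a Noetherian local ring `R`, the Peskine–Szpiro statement (PS) implies
Serre's dimension inequality (DI): if for all nonzero finitely generated `M`, `N` with
`pd N < ∞` and `M ⊗ N` of finite length one has `dim M ≤ grade N`, then for all such `M`, `N`
one has `dim M + dim N ≤ dim R`.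
-/

open CategoryTheory CategoryTheory.Limits

open scoped TensorProduct

universe u

/-- The Krull dimension of a commutative ring, valued in `WithBot ℕ∞`. -/
noncomputable def ringDim (R : Type u) [CommRing R] : WithBot ℕ∞ := ringKrullDim R

/-- The Krull dimension of a module `M`: the Krull dimension of `R ⧸ ann M`. -/
noncomputable def moduleDim (R : Type u) [CommRing R] (M : Type u) [AddCommGroup M]
    [Module R M] : WithBot ℕ∞ :=
  ringDim (R ⧸ Module.annihilator R M)

/-- The grade of a module `M`: the length of a maximal `R`-regular sequence contained in
`ann M`, i.e. the supremum of lengths of `R`-regular sequences of elements of `ann M`. -/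
noncomputable def moduleGrade (R : Type u) [CommRing R] (M : Type u) [AddCommGroup M]
    [Module R M] : ℕ∞ :=
  sSup {n : ℕ∞ | ∃ rs : List R, n = (rs.length : ℕ∞) ∧
    (∀ x ∈ rs, x ∈ Module.annihilator R M) ∧ RingTheory.Sequence.IsRegular R rs}

/-- A module has finite projective dimension iff for some `n` the functors `Ext^i(M, -)`
vanish for all `i > n`. -/
def HasFinitePD (R : Type u) [CommRing R] (M : Type u) [AddCommGroup M] [Module R M] : Prop :=
  ∃ n : ℕ, ∀ i : ℕ, n < i → ∀ L : ModuleCat.{u} R,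
    IsZero (((Ext R (ModuleCat.{u} R) i).obj (Opposite.op (ModuleCat.of R M))).obj L)


section Aux

open Order RingTheory.Sequence
open scoped Pointwise

namespace Stmt9Aux

lemma lemA {R : Type*} [CommRing R] {p : Ideal R} (hp : p ∈ minimalPrimes R)
    {x : R} (hx : x ∈ nonZeroDivisors R) (hxp : x ∈ p) : False := by
  haveI : p.IsPrime := hp.1.1
  set S := Localization p.primeCompl
  have h1 : algebraMap R S x ∈ IsLocalRing.maximalIdeal S :=
    (IsLocalization.AtPrime.to_map_mem_maximal_iff S p x).mpr hxp
  have h2 : IsNilpotent (algebraMap R S x) :=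
    (Set.disjoint_left.mp (Ideal.disjoint_nonZeroDivisors_of_mem_minimalPrimes hp) hxp hx).elim
  obtain ⟨n, hn⟩ := h2
  rw [← map_pow] at hn
  obtain ⟨m, hm⟩ := (IsLocalization.map_eq_zero_iff p.primeCompl S _).mp hn
  have : (m : R) = 0 := (mul_right_mem_nonZeroDivisors_eq_zero_iff (pow_mem hx n)).mp hm
  exact m.2 (this ▸ p.zero_mem)

-- generic ENat lemma
lemma enat_aux {h H : ℕ∞} (hyp : ∀ n : ℕ, (n : ℕ∞) ≤ h → (n : ℕ∞) + 1 ≤ H) : h + 1 ≤ H := by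
  induction h using ENat.recTopCoe with
  | top =>
    by_contra hc
    have hH : H ≠ ⊤ := fun h => hc (by rw [h]; exact le_top)
    obtain ⟨m, rfl⟩ := (WithTop.ne_top_iff_exists.mp hH).imp (fun a ha => ha.symm)
    have h2 := hyp (m + 1) le_top
    have h3 : ((m + 1 + 1 : ℕ) : ℕ∞) ≤ (m : ℕ∞) := by push_cast; push_cast at h2; exact h2
    exact absurd (Nat.cast_le.mp h3) (by omega)
  | coe n => exact hyp n le_rfl

lemma lemB {R : Type u} [CommRing R] {x : R} (hx : x ∈ nonZeroDivisors R) :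
    ringKrullDim (R ⧸ Ideal.span {x}) + 1 ≤ ringKrullDim R := by
  set I := Ideal.span {x}
  cases isEmpty_or_nonempty (PrimeSpectrum (R ⧸ I)) with
  | inl h =>
    rw [ringKrullDim, krullDim_eq_bot, WithBot.bot_add]
    exact bot_le
  | inr h =>
    have hnt : Nontrivial (R ⧸ I) := by
      refine not_subsingleton_iff_nontrivial.mp fun hs => ?_
      obtain ⟨p⟩ := h
      exact p.isPrime.ne_top (Subsingleton.elim _ _)
    haveI : Nontrivial R :=
      RingHom.domain_nontrivial (Ideal.Quotient.mk I)
    haveI : Nonempty (PrimeSpectrum R) := inferInstance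
    -- the strict mono map
    have hsurj := Ideal.Quotient.mk_surjective (I := I)
    set f : PrimeSpectrum (R ⧸ I) → PrimeSpectrum R :=
      fun q => ⟨q.asIdeal.comap (Ideal.Quotient.mk I), inferInstance⟩ with hf
    have hmono : StrictMono f :=
      Monotone.strictMono_of_injective (fun _ _ hab => Ideal.comap_mono hab)
        (fun a b hab => PrimeSpectrum.ext
          (Ideal.comap_injective_of_surjective _ hsurj (congrArg PrimeSpectrum.asIdeal hab)))
    have hx_mem : ∀ q : PrimeSpectrum (R ⧸ I), x ∈ (f q).asIdeal := fun q => by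
      show x ∈ q.asIdeal.comap (Ideal.Quotient.mk I)
      simp only [Ideal.mem_comap]
      have hz : Ideal.Quotient.mk I x = 0 :=
        Ideal.Quotient.eq_zero_iff_mem.mpr (Ideal.subset_span rfl)
      rw [hz]
      exact q.asIdeal.zero_mem
    -- key height inequality
    have hkey : ∀ a : PrimeSpectrum (R ⧸ I), height a + 1 ≤ height (f a) := by
      intro a
      refine enat_aux fun n hn => ?_
      obtain ⟨p, hlast, hlen⟩ := exists_series_of_le_height a hn
      obtain ⟨m, hm, hle⟩ := Ideal.exists_minimalPrimes_le (I := (⊥ : Ideal R))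
        (J := (f p.head).asIdeal) bot_le
      haveI : m.IsPrime := hm.1.1
      have hmlt : (⟨m, inferInstance⟩ : PrimeSpectrum R) < (p.map f hmono).head := by
        rw [LTSeries.head_map]
        refine lt_of_le_of_ne hle fun hEq => ?_
        have hxm := hx_mem p.head
        rw [← hEq] at hxm
        exact lemA hm hx hxm
      have hlast' : ((p.map f hmono).cons ⟨m, inferInstance⟩ hmlt).last = f a := by
        rw [RelSeries.last_cons, LTSeries.last_map, hlast]
      have := length_le_height (le_of_eq hlast')
      have hlen' : ((p.map f hmono).cons ⟨m, inferInstance⟩ hmlt).length = n + 1 := by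
        simp [hlen]
      rw [hlen'] at this
      exact_mod_cast this
    rw [ringKrullDim, ringKrullDim, krullDim_eq_iSup_height_of_nonempty,
      krullDim_eq_iSup_height_of_nonempty]
    have hfin : (⨆ a : PrimeSpectrum (R ⧸ I), height a) + 1
        ≤ ⨆ b : PrimeSpectrum R, height b := by
      rw [ENat.iSup_add]
      exact iSup_le fun a => le_trans (hkey a) (le_iSup _ (f a))
    rw [← WithBot.coe_one, ← WithBot.coe_add]
    exact WithBot.coe_le_coe.mpr hfin

lemma lemC : ∀ (n : ℕ) {R : Type u} [CommRing R] (rs : List R), rs.length = n →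
    IsWeaklyRegular R rs →
    ringKrullDim (R ⧸ Ideal.ofList rs) + (rs.length : WithBot ℕ∞) ≤ ringKrullDim R := by
  intro n
  induction n with
  | zero =>
    intro R _ rs hlen _
    rw [List.length_eq_zero_iff.mp hlen]
    simp only [List.length_nil, Nat.cast_zero, add_zero]
    exact le_of_eq (ringKrullDim_eq_of_ringEquiv
      ((Ideal.quotEquivOfEq Ideal.ofList_nil).trans (RingEquiv.quotientBot R)))
  | succ n ih =>
    intro R _ rs hlen h
    match rs, hlen, h with
    | r :: rs', hlen, h => ?_
    obtain ⟨h1, h2⟩ := (isWeaklyRegular_cons_iff R r rs').mp h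
    have hreg : r ∈ nonZeroDivisors R := mem_nonZeroDivisors_iff_right.mpr fun z hz => by
      have : r • z = r • 0 := by simpa [smul_eq_mul, mul_comm] using hz
      exact h1 this
    have heq : (r • ⊤ : Submodule R R) = Ideal.span {r} := by
      rw [← Submodule.ideal_span_singleton_smul, smul_eq_mul, Ideal.mul_top]
    have e : QuotSMulTop r R ≃ₗ[R] (R ⧸ Ideal.span {r}) := Submodule.quotEquivOfEq _ _ heq
    have h2' : IsWeaklyRegular (R ⧸ Ideal.span {r}) rs' := (e.isWeaklyRegular_congr rs').mp h2
    have h2'' : IsWeaklyRegular (R ⧸ Ideal.span {r})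
        (rs'.map (Ideal.Quotient.mk (Ideal.span {r}))) := by
      rw [← Ideal.Quotient.algebraMap_eq]
      exact (isWeaklyRegular_map_algebraMap_iff (S := R ⧸ Ideal.span {r}) (M := R ⧸ Ideal.span {r}) rs').mpr h2'
    have ihh := ih (rs'.map (Ideal.Quotient.mk (Ideal.span {r})))
      (by simpa using hlen) h2''
    rw [← Ideal.map_ofList] at ihh
    have e2 : ((R ⧸ Ideal.span {r}) ⧸
        Ideal.map (Ideal.Quotient.mk (Ideal.span {r})) (Ideal.ofList rs')) ≃+*
        R ⧸ Ideal.ofList (r :: rs') := by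
      rw [Ideal.ofList_cons]
      exact DoubleQuot.quotQuotEquivQuotSup _ _
    rw [ringKrullDim_eq_of_ringEquiv e2, List.length_map] at ihh
    have hcast : (((r :: rs').length : ℕ) : WithBot ℕ∞) = ((rs'.length : ℕ) : WithBot ℕ∞) + 1 := by
      push_cast [List.length_cons]
      ring
    rw [hcast, ← add_assoc]
    calc ringKrullDim (R ⧸ Ideal.ofList (r :: rs')) + ((rs'.length : ℕ) : WithBot ℕ∞) + 1
        ≤ ringKrullDim (R ⧸ Ideal.span {r}) + 1 := by exact add_le_add_left ihh 1
      _ ≤ ringKrullDim R := lemB hreg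

end Stmt9Aux

end Aux

theorem stmt_9 (R : Type u) [CommRing R] [IsLocalRing R] [IsNoetherianRing R]
    (hPS : ∀ (M N : Type u) [AddCommGroup M] [Module R M] [AddCommGroup N] [Module R N]
      [Module.Finite R M] [Module.Finite R N] [Nontrivial M] [Nontrivial N],
      HasFinitePD R N → IsFiniteLength R (M ⊗[R] N) →
      moduleDim R M ≤ (moduleGrade R N : WithBot ℕ∞)) :
    ∀ (M N : Type u) [AddCommGroup M] [Module R M] [AddCommGroup N] [Module R N]
      [Module.Finite R M] [Module.Finite R N] [Nontrivial M] [Nontrivial N],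
      HasFinitePD R N → IsFiniteLength R (M ⊗[R] N) →
      moduleDim R M + moduleDim R N ≤ ringDim R := by
  intro M N _ _ _ _ _ _ _ _ hPD hFL
  have hMN : moduleDim R M ≤ (moduleGrade R N : WithBot ℕ∞) := hPS M N hPD hFL
  have hannN : Module.annihilator R N ≠ ⊤ := by
    intro htop
    obtain ⟨a, b, hab⟩ := exists_pair_ne N
    have h1 : (1 : R) ∈ Module.annihilator R N := htop ▸ Submodule.mem_top
    rw [Module.mem_annihilator] at h1
    exact hab (by rw [← one_smul R a, h1 a, ← one_smul R b, h1 b])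
  haveI : Nontrivial (R ⧸ Module.annihilator R N) := Ideal.Quotient.nontrivial_iff.mpr hannN
  obtain ⟨e, he⟩ : ∃ e : ℕ∞, moduleDim R N = (e : WithBot ℕ∞) := by
    have h0 : (0 : WithBot ℕ∞) ≤ moduleDim R N := ringKrullDim_nonneg_of_nontrivial
    have hne : moduleDim R N ≠ ⊥ := by
      intro hbot
      rw [hbot] at h0
      simp at h0
    obtain ⟨b, hb⟩ := WithBot.ne_bot_iff_exists.mp hne
    exact ⟨b, hb.symm⟩
  obtain ⟨d, hd⟩ : ∃ d : ℕ∞, ringDim R = (d : WithBot ℕ∞) := by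
    have h0 : (0 : WithBot ℕ∞) ≤ ringDim R := ringKrullDim_nonneg_of_nontrivial
    have hne : ringDim R ≠ ⊥ := by
      intro hbot
      rw [hbot] at h0
      simp at h0
    obtain ⟨b, hb⟩ := WithBot.ne_bot_iff_exists.mp hne
    exact ⟨b, hb.symm⟩
  have hed : e ≤ d := by
    have := ringKrullDim_quotient_le (R := R) (Module.annihilator R N)
    rw [show ringKrullDim (R ⧸ Module.annihilator R N) = moduleDim R N from rfl, he,
      show ringKrullDim R = ringDim R from rfl, hd] at this
    exact_mod_cast this
  have key : ∀ n ∈ {n : ℕ∞ | ∃ rs : List R, n = (rs.length : ℕ∞) ∧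
      (∀ x ∈ rs, x ∈ Module.annihilator R N) ∧ RingTheory.Sequence.IsRegular R rs},
      e + n ≤ d := by
    rintro n ⟨rs, rfl, hmem, hreg⟩
    have hwr : RingTheory.Sequence.IsWeaklyRegular R rs :=
      ((RingTheory.Sequence.isRegular_iff R rs).mp hreg).1
    have hC := Stmt9Aux.lemC rs.length rs rfl hwr
    have hle : Ideal.ofList rs ≤ Module.annihilator R N := by
      rw [Ideal.ofList, Ideal.span_le]
      intro x hx
      exact hmem x hx
    have hsurj : Function.Surjective (Ideal.Quotient.factor hle) := by
      intro y
      obtain ⟨z, rfl⟩ := Ideal.Quotient.mk_surjective y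
      exact ⟨Ideal.Quotient.mk _ z, rfl⟩
    have hNle : moduleDim R N ≤ ringDim (R ⧸ Ideal.ofList rs) :=
      ringKrullDim_le_of_surjective _ hsurj
    have hfin : (e : WithBot ℕ∞) + ((rs.length : ℕ∞) : WithBot ℕ∞) ≤ (d : WithBot ℕ∞) := by
      calc (e : WithBot ℕ∞) + ((rs.length : ℕ∞) : WithBot ℕ∞)
          ≤ ringDim (R ⧸ Ideal.ofList rs) + ((rs.length : ℕ∞) : WithBot ℕ∞) := by
            gcongr
            exact he ▸ hNle
        _ ≤ ringDim R := hC
        _ = (d : WithBot ℕ∞) := hd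
    rw [← WithBot.coe_add] at hfin
    exact_mod_cast hfin
  by_cases hetop : e = ⊤
  · have hdtop : d = ⊤ := top_le_iff.mp (hetop ▸ hed)
    rw [hd, hdtop]
    exact le_top
  have hsum : moduleGrade R N + e ≤ d := by
    have h1 : moduleGrade R N ≤ d - e :=
      sSup_le fun n hn => ENat.le_sub_of_add_le_left hetop (key n hn)
    calc moduleGrade R N + e ≤ (d - e) + e := add_le_add_left h1 e
      _ = d := tsub_add_cancel_of_le hed
  calc moduleDim R M + moduleDim R N
      ≤ (moduleGrade R N : WithBot ℕ∞) + (e : WithBot ℕ∞) := by rw [← he]; gcongr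
    _ = ((moduleGrade R N + e : ℕ∞) : WithBot ℕ∞) := by rw [WithBot.coe_add]
    _ ≤ (d : WithBot ℕ∞) := WithBot.coe_le_coe.mpr hsum
    _ = ringDim R := hd.symm
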